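/- Iterating the halving-with-count gadget: starting from st = 1, te = 0, x = 1/m, count = 0, and requiring the final configuration to have count = 1, any sequence of complete iterations of the initialization gadget consists of exactly m iterations, and the final value of st is 1/2^m. -/

import Mathlib

/-- A configuration of the initialization gadget: counters `st, te, x, count`. -/
structure InitConf where
  st : ℚ
  te : ℚ
  x : ℚ
  count : ℚ

/-- All four counters lie in `[0,1]`. -/
def InitConf.InBox (C : InitConf) : Prop :=
  (0 ≤ C.st ∧ C.st ≤ 1) ∧ (0 ≤ C.te ∧ C.te ≤ 1) ∧
    (0 ≤ C.x ∧ C.x ≤ 1) ∧ (0 ≤ C.count ∧ C.count ≤ 1)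

/-- One complete iteration of the initialization gadget: four consecutive firings with
fractions `α₁,…,α₄ ∈ (0,1]`:
`(te += 1, st −= 2; test st = 0)`, `(st += 1, te −= 1; test te = 0)`,
`(te += 1, count += 1, x −= 1; test x = 0)`, `(x += 1, te −= 1; test te = 0)`,
where every intermediate configuration stays in `[0,1]⁴`. -/
def InitIter (C C' : InitConf) : Prop :=
  ∃ α₁ α₂ α₃ α₄ : ℚ,
    (0 < α₁ ∧ α₁ ≤ 1) ∧ (0 < α₂ ∧ α₂ ≤ 1) ∧ (0 < α₃ ∧ α₃ ≤ 1) ∧ (0 < α₄ ∧ α₄ ≤ 1) ∧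
    C.InBox ∧
    let D₁ : InitConf := ⟨C.st - 2 * α₁, C.te + α₁, C.x, C.count⟩
    D₁.InBox ∧ D₁.st = 0 ∧
    let D₂ : InitConf := ⟨D₁.st + α₂, D₁.te - α₂, D₁.x, D₁.count⟩
    D₂.InBox ∧ D₂.te = 0 ∧
    let D₃ : InitConf := ⟨D₂.st, D₂.te + α₃, D₂.x - α₃, D₂.count + α₃⟩
    D₃.InBox ∧ D₃.x = 0 ∧
    let D₄ : InitConf := ⟨D₃.st, D₃.te - α₄, D₃.x + α₄, D₃.count⟩
    D₄.InBox ∧ D₄.te = 0 ∧ C' = D₄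

/-- `k` successive complete iterations of the gadget. -/
inductive InitIterN : ℕ → InitConf → InitConf → Prop where
  | zero (C : InitConf) : InitIterN 0 C C
  | succ {k : ℕ} {C C' C'' : InitConf} :
      InitIter C C' → InitIterN k C' C'' → InitIterN (k + 1) C C''


lemma init_step (C C' : InitConf) (h : InitIter C C') (hte : C.te = 0) :
    C'.st = C.st / 2 ∧ C'.te = 0 ∧ C'.x = C.x ∧ C'.count = C.count + C.x := by
  obtain ⟨α₁, α₂, α₃, α₄, h1, h2, h3, h4, hbox, hD⟩ := h
  simp only at hD
  obtain ⟨_, hst0, _, hte0, _, hx0, _, hte0', hC'⟩ := hD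
  subst hC'
  refine ⟨?_, ?_, ?_, ?_⟩ <;> simp <;> linarith

lemma init_iterN (k : ℕ) (C C' : InitConf) (h : InitIterN k C C') (hte : C.te = 0) :
    C'.st = C.st / 2 ^ k ∧ C'.te = 0 ∧ C'.x = C.x ∧ C'.count = C.count + k * C.x := by
  induction h with
  | zero C => simp [hte]
  | succ hstep _ ih =>
    obtain ⟨h1, h2, h3, h4⟩ := init_step _ _ hstep hte
    obtain ⟨g1, g2, g3, g4⟩ := ih h2
    refine ⟨?_, g2, by rw [g3, h3], ?_⟩
    · rw [g1, h1]; ring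
    · rw [g4, h4, h3]; push_cast; ring

/-- Starting from `st = 1, te = 0, x = 1/m, count = 0` and requiring the
final configuration to have `count = 1`, any sequence of complete iterations of the
initialization gadget consists of exactly `m` iterations, and then `st = 1/2^m`. -/
theorem init_gadget_iterated (m : ℕ) (hm : 1 ≤ m) (k : ℕ) (C' : InitConf)
    (h : InitIterN k ⟨1, 0, 1 / (m : ℚ), 0⟩ C')
    (hcount : C'.count = 1) :
    k = m ∧ C'.st = 1 / 2 ^ m := by

  have hm0 : (m : ℚ) ≠ 0 := by positivity
  obtain ⟨g1, g2, g3, g4⟩ := init_iterN k _ _ h rfl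
  simp only at g1 g2 g3 g4
  rw [g4] at hcount
  field_simp at hcount
  have : k = m := by simpa using hcount
  subst this
  exact ⟨rfl, g1⟩
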